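/- Let S ⊆ ℕ be syndetic with S ∪ (S−1) ∪ … ∪ (S−(k−1)) ⊇ ℕ, let h > k, and let S_i := S ∩ (h²ℕ + [ih, (i+1)h)) for 0 ≤ i ≤ h−1. Let (X,T) be a nontrivial totally transitive system, x a transitive point, and μ a T-invariant Borel probability measure on X. If X_i denotes the closure of {Tⁿx : n ∈ S_i}, then μ(X_i) ≥ 1/k for each i, and consequently there exist 0 ≤ i < j ≤ h−1 with X_i ∩ X_j ≠ ∅. -/

import Mathlib

open MeasureTheory
open scoped ENNReal

lemma atom_zero {X : Type*} [MeasurableSpace X] [MeasurableSingletonClass X]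
    (T : X → X) (μ : Measure X) [IsProbabilityMeasure μ]
    (hμ : MeasurePreserving T μ μ) (z : X)
    (hinj : Function.Injective fun n : ℕ => T^[n] z) : μ {z} = 0 := by
  set c := μ {z} with hc
  by_contra hc0
  have hmono : ∀ n : ℕ, c ≤ μ {T^[n] z} := by
    intro n
    induction n with
    | zero => simp [hc]
    | succ n ih =>
      refine ih.trans ?_
      have hsub : {T^[n] z} ⊆ T ⁻¹' {T^[n+1] z} := by
        intro w hw
        simp only [Set.mem_singleton_iff] at hw
        simp [hw, Set.mem_preimage, ← Function.iterate_succ_apply' T n z]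
      calc μ {T^[n] z} ≤ μ (T ⁻¹' {T^[n+1] z}) := measure_mono hsub
        _ = μ {T^[n+1] z} := hμ.measure_preimage (measurableSet_singleton _).nullMeasurableSet
  have hbig : ∀ M : ℕ, (M : ℝ≥0∞) * c ≤ 1 := by
    intro M
    have hdisj : (↑(Finset.range M) : Set ℕ).PairwiseDisjoint fun n => ({T^[n] z} : Set X) := by
      intro a _ b _ hab
      simp only [Set.disjoint_singleton_left, Set.mem_singleton_iff]
      exact fun hEq => hab (hinj hEq)
    have hsum := measure_biUnion_finset hdisj (fun n _ => measurableSet_singleton _) (μ := μ)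
    have hle : (M : ℝ≥0∞) * c ≤ ∑ n ∈ Finset.range M, μ {T^[n] z} := by
      calc (M : ℝ≥0∞) * c = ∑ _n ∈ Finset.range M, c := by
            simp [Finset.sum_const, nsmul_eq_mul]
        _ ≤ ∑ n ∈ Finset.range M, μ {T^[n] z} := Finset.sum_le_sum fun n _ => hmono n
    calc (M : ℝ≥0∞) * c ≤ μ (⋃ n ∈ Finset.range M, {T^[n] z}) := by rw [hsum]; exact hle
      _ ≤ 1 := prob_le_one
  have hctop : c ≠ ⊤ := measure_ne_top μ _
  obtain ⟨M, hM⟩ := ENNReal.exists_nat_gt (show c⁻¹ ≠ ⊤ from ENNReal.inv_ne_top.2 hc0)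
  have h1 : (1 : ℝ≥0∞) < c * M := by
    calc (1 : ℝ≥0∞) = c * c⁻¹ := (ENNReal.mul_inv_cancel hc0 hctop).symm
      _ < c * M := by
          exact (ENNReal.mul_lt_mul_iff_right hc0 hctop).2 hM
  have := hbig M
  rw [mul_comm] at h1
  exact absurd (h1.trans_le this) (lt_irrefl _)

lemma finite_case {X : Type*} [TopologicalSpace X] [T1Space X]
    (T : X → X)
    (htt : ∀ l : ℕ, 0 < l → ∃ y : X, Dense (Set.range fun n : ℕ => T^[l * n] y))
    (x : X) (hx : Dense (Set.range fun n : ℕ => T^[n] x))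
    (t q : ℕ) (hq : 0 < q) (hper : T^[t + q] x = T^[t] x) :
    ∃ p : X, (∀ m, t ≤ m → T^[m] x = p) ∧ (∀ w : X, ∃ j : ℕ, w = T^[j] x) := by
  classical
  -- periodicity beyond t
  have hper' : ∀ m, t ≤ m → T^[m + q] x = T^[m] x := by
    intro m hm
    have h1 : m + q = (m - t) + (t + q) := by omega
    have h2 : m = (m - t) + t := by omega
    rw [h1, Function.iterate_add_apply, hper, ← Function.iterate_add_apply, ← h2]
  -- the whole orbit has indices < t + q
  have hrange : ∀ n, ∃ n' < t + q, T^[n] x = T^[n'] x := by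
    intro n
    induction n using Nat.strong_induction_on with
    | _ n ih =>
      by_cases hn : n < t + q
      · exact ⟨n, hn, rfl⟩
      · push_neg at hn
        have h1 : n = (n - q) + q := by omega
        have h2 : T^[n] x = T^[n - q] x := by
          conv_lhs => rw [h1]
          exact hper' (n - q) (by omega)
        obtain ⟨n', hn', hEq⟩ := ih (n - q) (by omega)
        exact ⟨n', hn', h2.trans hEq⟩
  -- X is the (finite) orbit
  have hRfin : (Set.Finite {z : X | ∃ n' < t + q, z = T^[n'] x}) := by
    have : {z : X | ∃ n' < t + q, z = T^[n'] x} ⊆ (fun n => T^[n] x) '' (Set.Iio (t + q)) := by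
      rintro z ⟨n', hn', rfl⟩; exact ⟨n', hn', rfl⟩
    exact ((Set.finite_Iio _).image _).subset this
  have hXR : ∀ w : X, ∃ n' < t + q, w = T^[n'] x := by
    have hsub : Set.range (fun n : ℕ => T^[n] x) ⊆ {z : X | ∃ n' < t + q, z = T^[n'] x} := by
      rintro z ⟨n, rfl⟩
      obtain ⟨n', hn', hEq⟩ := hrange n
      exact ⟨n', hn', hEq⟩
    have : (Set.univ : Set X) ⊆ {z : X | ∃ n' < t + q, z = T^[n'] x} := by
      rw [← hx.closure_eq]
      calc closure (Set.range fun n : ℕ => T^[n] x)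
          ⊆ closure {z : X | ∃ n' < t + q, z = T^[n'] x} := closure_mono hsub
        _ = _ := hRfin.isClosed.closure_eq
    intro w; exact this (Set.mem_univ w)
  have hXfin : (Set.univ : Set X).Finite :=
    hRfin.subset (fun w _ => hXR w)
  -- transitive point for T^q
  obtain ⟨y, hy⟩ := htt q hq
  have hyall : ∀ w : X, ∃ n, w = T^[q * n] y := by
    intro w
    have hrfin : (Set.range fun n : ℕ => T^[q * n] y).Finite :=
      hXfin.subset (Set.subset_univ _)
    have : (Set.univ : Set X) ⊆ Set.range fun n : ℕ => T^[q * n] y := by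
      rw [← hy.closure_eq, hrfin.isClosed.closure_eq]
    obtain ⟨n, hn⟩ := this (Set.mem_univ w)
    exact ⟨n, hn.symm⟩
  -- Z = eventual orbit, fixed by T^q
  have hZfix : ∀ z : X, (∃ m, t ≤ m ∧ z = T^[m] x) → T^[q] z = z := by
    rintro z ⟨m, hm, rfl⟩
    rw [← Function.iterate_add_apply]
    rw [show q + m = m + q by omega]
    exact hper' m hm
  have hZy : ∃ n, ∃ m, t ≤ m ∧ T^[q * n] y = T^[m] x := by
    obtain ⟨n, hn⟩ := hyall (T^[t] x)
    exact ⟨n, t, le_refl t, hn.symm⟩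
  set n₂ := Nat.find hZy with hn₂def
  obtain ⟨m₀, hm₀, hp⟩ := Nat.find_spec hZy
  set p := T^[q * n₂] y with hpdef
  have hpZ : ∃ m, t ≤ m ∧ p = T^[m] x := ⟨m₀, hm₀, hp⟩
  have hconst : ∀ j : ℕ, T^[q * (n₂ + j)] y = p := by
    intro j
    induction j with
    | zero => rfl
    | succ j ih =>
      have : q * (n₂ + (j+1)) = q + q * (n₂ + j) := by ring
      rw [this, Function.iterate_add_apply, ih]
      exact hZfix p hpZ
  have hZp : ∀ z : X, (∃ m, t ≤ m ∧ z = T^[m] x) → z = p := by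
    intro z hz
    obtain ⟨n, hn⟩ := hyall z
    by_cases hlt : n < n₂
    · exact absurd (by
        obtain ⟨m, hm, hzm⟩ := hz
        exact ⟨m, hm, by rw [← hn, hzm]⟩) (Nat.find_min hZy hlt)
    · push_neg at hlt
      have : T^[q * n] y = p := by
        have := hconst (n - n₂)
        rwa [show n₂ + (n - n₂) = n by omega] at this
      rw [hn, this]
  refine ⟨p, fun m hm => hZp _ ⟨m, hm, rfl⟩, fun w => ?_⟩
  obtain ⟨n', _, hw⟩ := hXR w
  exact ⟨n', hw⟩


lemma key_full {X : Type*} [MetricSpace X] [CompactSpace X]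
    [MeasurableSpace X] [BorelSpace X]
    (T : X → X) (hT : Continuous T)
    (htt : ∀ l : ℕ, 0 < l → ∃ y : X, Dense (Set.range fun n : ℕ => T^[l * n] y))
    (x : X) (hx : Dense (Set.range fun n : ℕ => T^[n] x))
    (μ : Measure X) [IsProbabilityMeasure μ] (hμ : MeasurePreserving T μ μ)
    (l : ℕ) (hl : 0 < l) :
    μ (closure {z : X | ∃ n : ℕ, z = T^[l * n] x}) = 1 := by
  classical
  set C : ℕ → Set X := fun r => closure {z : X | ∃ n : ℕ, z = T^[l * n + r] x} with hCdef
  have hCclosed : ∀ r, IsClosed (C r) := fun r => isClosed_closure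
  -- finite union covers
  have hcover : (⋃ r, C r) = Set.univ := by
    have hsub : Set.range (fun n : ℕ => T^[n] x) ⊆ ⋃ r ∈ Finset.range l, C r := by
      rintro z ⟨n, rfl⟩
      refine Set.mem_biUnion (Finset.mem_range.2 (Nat.mod_lt n hl)) ?_
      exact subset_closure ⟨n / l, by rw [Nat.div_add_mod]⟩
    have hclosed : IsClosed (⋃ r ∈ Finset.range l, C r) :=
      (Finset.range l).finite_toSet.isClosed_biUnion fun r _ => hCclosed r
    have huniv : (⋃ r ∈ Finset.range l, C r) = Set.univ := by
      apply Set.eq_univ_of_univ_subset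
      rw [← hx.closure_eq]
      calc closure (Set.range fun n : ℕ => T^[n] x) ⊆ closure (⋃ r ∈ Finset.range l, C r) :=
            closure_mono hsub
        _ = _ := hclosed.closure_eq
    apply Set.eq_univ_of_univ_subset
    rw [← huniv]
    exact Set.iUnion₂_subset_iUnion _ _
  -- Baire
  haveI : Nonempty X := ⟨x⟩
  obtain ⟨r₀, hr₀⟩ := nonempty_interior_of_iUnion_of_closed hCclosed hcover
  obtain ⟨y, hy⟩ := htt l hl
  obtain ⟨w, ⟨m, rfl⟩, hw⟩ := hy.exists_mem_open isOpen_interior hr₀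
  -- T^[l]-invariance of C r₀
  have hinv : ∀ z ∈ C r₀, T^[l] z ∈ C r₀ := by
    intro z hz
    have h1 : T^[l] '' C r₀ ⊆ closure (T^[l] '' {z : X | ∃ n : ℕ, z = T^[l * n + r₀] x}) :=
      image_closure_subset_closure_image (hT.iterate l)
    have h2 : T^[l] '' {z : X | ∃ n : ℕ, z = T^[l * n + r₀] x}
        ⊆ {z : X | ∃ n : ℕ, z = T^[l * n + r₀] x} := by
      rintro w ⟨v, ⟨n, rfl⟩, rfl⟩
      exact ⟨n + 1, by rw [← Function.iterate_add_apply]; congr 1; ring⟩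
    exact (closure_mono h2) (h1 ⟨z, hz, rfl⟩)
  have htail : ∀ n : ℕ, T^[l * (m + n)] y ∈ C r₀ := by
    intro n
    induction n with
    | zero => exact interior_subset hw
    | succ n ih =>
      have : l * (m + (n + 1)) = l + l * (m + n) := by ring
      rw [this, Function.iterate_add_apply]
      exact hinv _ ih
  -- complement of C r₀ is contained in the finite head F
  set F : Set X := (fun n : ℕ => T^[l * n] y) '' (Set.Iio m) with hFdef
  have hFfin : F.Finite := (Set.finite_Iio m).image _
  have hcompl : Set.univ \ C r₀ ⊆ F := by
    intro z hz
    by_contra hzF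
    have hzy : z ∈ closure (Set.range fun n : ℕ => T^[l * n] y) := by
      rw [hy.closure_eq]; trivial
    have hsplit : Set.range (fun n : ℕ => T^[l * n] y)
        ⊆ F ∪ {w : X | ∃ n : ℕ, w = T^[l * (m + n)] y} := by
      rintro w ⟨n, rfl⟩
      by_cases hn : n < m
      · exact Or.inl ⟨n, hn, rfl⟩
      · exact Or.inr ⟨n - m, by congr 1; omega⟩
    have : z ∈ closure F ∪ closure {w : X | ∃ n : ℕ, w = T^[l * (m + n)] y} := by
      rw [← closure_union]
      exact closure_mono hsplit hzy
    rcases this with hzF' | hztail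
    · exact hzF (by rwa [hFfin.isClosed.closure_eq] at hzF')
    · have : closure {w : X | ∃ n : ℕ, w = T^[l * (m + n)] y} ⊆ C r₀ := by
        apply closure_minimal _ (hCclosed r₀)
        rintro w ⟨n, rfl⟩
        exact htail n
      exact hz.2 (this hztail)
  -- points outside C r₀ are isolated and have measure zero
  set G : Set X := Set.univ \ C r₀ with hGdef
  have hGopen : IsOpen G := by
    have : G = (C r₀)ᶜ := by rw [hGdef]; ext w; simp
    rw [this]
    exact (hCclosed r₀).isOpen_compl
  have hGfin : G.Finite := hFfin.subset hcompl
  have hiso : ∀ z ∈ G, IsOpen ({z} : Set X) := by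
    intro z hz
    have h1 : ({z} : Set X) = G ∩ (G \ {z})ᶜ := by
      ext w
      simp only [Set.mem_singleton_iff, Set.mem_inter_iff, Set.mem_compl_iff, Set.mem_diff]
      constructor
      · rintro rfl; exact ⟨hz, fun hh => hh.2 rfl⟩
      · rintro ⟨hwG, hw⟩
        by_contra hne
        exact hw ⟨hwG, hne⟩
    rw [h1]
    exact hGopen.inter ((hGfin.diff (t := {z})).isClosed.isOpen_compl)
  -- each point of G has measure zero
  have hμG : ∀ z ∈ G, μ {z} = 0 := by
    intro z hz
    -- z is on the orbit of x
    obtain ⟨_, ⟨N, rfl⟩, hN⟩ := hx.exists_mem_open (hiso z hz) ⟨z, rfl⟩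
    simp only [Set.mem_singleton_iff] at hN
    subst hN
    by_cases hep : ∃ n₀ n₁ : ℕ, n₀ < n₁ ∧ T^[n₁] (T^[N] x) = T^[n₀] (T^[N] x)
    · -- eventually periodic: X is finite with an absorbing fixed point p
      obtain ⟨n₀, n₁, hlt, hEq⟩ := hep
      have hper : T^[(N + n₀) + (n₁ - n₀)] x = T^[N + n₀] x := by
        have e1 : T^[n₁] (T^[N] x) = T^[n₁ + N] x := by
          rw [Function.iterate_add_apply]
        have e2 : T^[n₀] (T^[N] x) = T^[n₀ + N] x := by
          rw [Function.iterate_add_apply]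
        rw [e1, e2] at hEq
        calc T^[(N + n₀) + (n₁ - n₀)] x = T^[n₁ + N] x := by congr 1; omega
          _ = T^[n₀ + N] x := hEq
          _ = T^[N + n₀] x := by congr 1; omega
      obtain ⟨p, hp, hall⟩ := finite_case T htt x hx (N + n₀) (n₁ - n₀) (by omega) hper
      -- p belongs to C r₀
      have hpC : p ∈ C r₀ := by
        apply subset_closure
        refine ⟨N + n₀, (hp (l * (N + n₀) + r₀) ?_).symm⟩
        have : N + n₀ ≤ l * (N + n₀) := Nat.le_mul_of_pos_left _ hl
        omega
      have hzp : T^[N] x ≠ p := fun hEq' => hz.2 (hEq' ▸ hpC)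
      -- μ {p} = 1
      have hμp : μ {p} = 1 := by
        have hpre : T^[N + n₀] ⁻¹' ({p} : Set X) = Set.univ := by
          apply Set.eq_univ_of_forall
          intro w
          obtain ⟨j, rfl⟩ := hall w
          simp only [Set.mem_preimage, Set.mem_singleton_iff,
            ← Function.iterate_add_apply]
          exact hp _ (Nat.le_add_right _ _)
        have := (hμ.iterate (N + n₀)).measure_preimage
          (measurableSet_singleton p).nullMeasurableSet
        rw [hpre] at this
        simpa using this.symm
      have : μ {T^[N] x} ≤ μ ({p}ᶜ) := measure_mono (by
        intro w hw
        simp only [Set.mem_singleton_iff] at hw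
        simp [hw, hzp])
      rwa [measure_compl (measurableSet_singleton p) (measure_ne_top μ _), hμp,
        measure_univ, tsub_self, le_zero_iff] at this
    · -- injective orbit of z : atom_zero
      push_neg at hep
      apply atom_zero T μ hμ
      intro a b hab
      simp only at hab
      by_contra hne
      rcases Nat.lt_or_ge a b with h' | h'
      · exact hep a b h' hab.symm
      · have h'' : b < a := by omega
        exact hep b a h'' hab
  -- μ (C r₀) = 1
  have hμG0 : μ G = 0 := by
    have hGc : G.Countable := hGfin.countable
    have : G = ⋃ z ∈ G, ({z} : Set X) := by simp
    rw [this]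
    exact (measure_biUnion_null_iff hGc).2 hμG
  have hμCr : μ (C r₀) = 1 := by
    have h1 : (1 : ℝ≥0∞) = μ Set.univ := (measure_univ).symm
    have h2 : μ Set.univ ≤ μ (C r₀) + μ G := by
      rw [show (Set.univ : Set X) = C r₀ ∪ G by rw [hGdef]; simp [Set.union_diff_self]]
      exact measure_union_le _ _
    have := h2
    rw [hμG0, add_zero] at this
    exact le_antisymm prob_le_one (h1 ▸ this)
  -- transport from C r₀ to C 0 type set
  set s := l - r₀ % l with hsdef
  have hmap : ∀ z ∈ C r₀, T^[s] z ∈ closure {z : X | ∃ n : ℕ, z = T^[l * n] x} := by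
    intro z hz
    have h1 : T^[s] '' C r₀ ⊆ closure (T^[s] '' {z : X | ∃ n : ℕ, z = T^[l * n + r₀] x}) :=
      image_closure_subset_closure_image (hT.iterate s)
    have h2 : T^[s] '' {z : X | ∃ n : ℕ, z = T^[l * n + r₀] x}
        ⊆ {z : X | ∃ n : ℕ, z = T^[l * n] x} := by
      rintro w ⟨v, ⟨n, rfl⟩, rfl⟩
      refine ⟨n + 1 + r₀ / l, ?_⟩
      rw [← Function.iterate_add_apply]
      congr 1
      have hb : r₀ % l < l := Nat.mod_lt r₀ hl
      have hdm : l * (r₀ / l) + r₀ % l = r₀ := Nat.div_add_mod r₀ l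
      have expand : l * (n + 1 + r₀ / l) = l * n + l + l * (r₀ / l) := by ring
      omega
    exact (closure_mono h2) (h1 ⟨z, hz, rfl⟩)
  have hclosed0 : IsClosed (closure {z : X | ∃ n : ℕ, z = T^[l * n] x}) := isClosed_closure
  have hsub : C r₀ ⊆ T^[s] ⁻¹' closure {z : X | ∃ n : ℕ, z = T^[l * n] x} := hmap
  have hpre := (hμ.iterate s).measure_preimage hclosed0.measurableSet.nullMeasurableSet
  have h1le : (1 : ℝ≥0∞) ≤ μ (closure {z : X | ∃ n : ℕ, z = T^[l * n] x}) := by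
    rw [← hpre]
    calc (1 : ℝ≥0∞) = μ (C r₀) := hμCr.symm
      _ ≤ _ := measure_mono hsub
  exact le_antisymm prob_le_one h1le

/-- Let `S ⊆ ℕ` be syndetic with `S ∪ (S−1) ∪ … ∪ (S−(k−1)) ⊇ ℕ`, `h > k`,
and `Sᵢ = S ∩ (h²ℕ + [ih,(i+1)h))`. For a nontrivial totally transitive system `(X,T)`,
a transitive point `x`, and a `T`-invariant Borel probability measure `μ`, the closures
`Xᵢ` of `{Tⁿx : n ∈ Sᵢ}` satisfy `μ(Xᵢ) ≥ 1/k`, and some two of them intersect. -/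
theorem stmt7 {X : Type*} [MetricSpace X] [CompactSpace X] [Nontrivial X]
    [MeasurableSpace X] [BorelSpace X]
    (T : X → X) (hT : Continuous T)
    (htt : ∀ l : ℕ, 0 < l → ∃ y : X, Dense (Set.range fun n : ℕ => T^[l * n] y))
    (x : X) (hx : Dense (Set.range fun n : ℕ => T^[n] x))
    (μ : Measure X) [IsProbabilityMeasure μ] (hμ : MeasurePreserving T μ μ)
    (S : Set ℕ) (k h : ℕ) (hk : 0 < k) (hkh : k < h)
    (hsynd : ∀ n : ℕ, ∃ j < k, n + j ∈ S)
    (Si : ℕ → Set ℕ)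
    (hSi : ∀ i, Si i = S ∩ {m : ℕ | ∃ n r : ℕ, i * h ≤ r ∧ r < (i + 1) * h ∧ m = h ^ 2 * n + r})
    (Xi : ℕ → Set X)
    (hXi : ∀ i, Xi i = closure {y : X | ∃ n ∈ Si i, y = T^[n] x}) :
    (∀ i ≤ h - 1, (1 : ℝ≥0∞) / k ≤ μ (Xi i)) ∧
    ∃ i j : ℕ, i < j ∧ j ≤ h - 1 ∧ (Xi i ∩ Xi j).Nonempty := by
  classical
  have hk0 : (k : ℝ≥0∞) ≠ 0 := by exact_mod_cast hk.ne'
  have hktop : (k : ℝ≥0∞) ≠ ⊤ := ENNReal.natCast_ne_top k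
  have hXiclosed : ∀ i, IsClosed (Xi i) := fun i => (hXi i) ▸ isClosed_closure
  have hXimeas : ∀ i, MeasurableSet (Xi i) := fun i => (hXiclosed i).measurableSet
  have hh2 : 0 < h ^ 2 := by
    have h0 : 0 < h := lt_trans hk hkh
    positivity
  have part1 : ∀ i : ℕ, (1 : ℝ≥0∞) / k ≤ μ (Xi i) := by
    intro i
    set U : Set X := ⋃ j ∈ Finset.range k, T^[j] ⁻¹' (Xi i) with hUdef
    have hUclosed : IsClosed U :=
      (Finset.range k).finite_toSet.isClosed_biUnion
        fun j _ => (hXiclosed i).preimage (hT.iterate j)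
    have horb : ∀ n : ℕ, T^[h ^ 2 * n + i * h] x ∈ U := by
      intro n
      obtain ⟨j, hj, hjS⟩ := hsynd (h ^ 2 * n + i * h)
      refine Set.mem_biUnion (Finset.mem_range.2 hj) ?_
      simp only [Set.mem_preimage]
      rw [hXi i]
      apply subset_closure
      refine ⟨h ^ 2 * n + (i * h + j), ?_, ?_⟩
      · rw [hSi i]
        constructor
        · rw [← Nat.add_assoc]
          exact hjS
        · refine ⟨n, i * h + j, Nat.le_add_right _ _, ?_, rfl⟩
          have hjh : j < h := lt_trans hj hkh
          calc i * h + j < i * h + h := by omega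
            _ = (i + 1) * h := by ring
      · rw [← Function.iterate_add_apply]
        congr 1
        ring
    have hDsub : closure {z : X | ∃ n : ℕ, z = T^[h ^ 2 * n + i * h] x} ⊆ U :=
      closure_minimal (by rintro z ⟨n, rfl⟩; exact horb n) hUclosed
    have hkey := key_full T hT htt x hx μ hμ (h ^ 2) hh2
    set D := closure {z : X | ∃ n : ℕ, z = T^[h ^ 2 * n] x} with hDdef
    have himg : T^[i * h] '' D ⊆ closure {z : X | ∃ n : ℕ, z = T^[h ^ 2 * n + i * h] x} := by
      refine (image_closure_subset_closure_image (hT.iterate _)).trans (closure_mono ?_)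
      rintro w ⟨v, ⟨n, rfl⟩, rfl⟩
      exact ⟨n, by rw [← Function.iterate_add_apply]; congr 1; ring⟩
    have hE : IsCompact (T^[i * h] '' D) :=
      (isClosed_closure.isCompact).image (hT.iterate _)
    have hEmeas : MeasurableSet (T^[i * h] '' D) := hE.isClosed.measurableSet
    have h1E : (1 : ℝ≥0∞) ≤ μ (T^[i * h] '' D) := by
      have hpre := (hμ.iterate (i * h)).measure_preimage hEmeas.nullMeasurableSet
      rw [← hpre]
      calc (1 : ℝ≥0∞) = μ D := hkey.symm
        _ ≤ μ (T^[i * h] ⁻¹' (T^[i * h] '' D)) :=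
            measure_mono (Set.subset_preimage_image _ _)
    have hU1 : (1 : ℝ≥0∞) ≤ μ U := h1E.trans (measure_mono (himg.trans hDsub))
    have hone : (1 : ℝ≥0∞) ≤ k * μ (Xi i) := by
      calc (1 : ℝ≥0∞) ≤ μ U := hU1
        _ ≤ ∑ j ∈ Finset.range k, μ (T^[j] ⁻¹' Xi i) := measure_biUnion_finset_le _ _
        _ = ∑ _j ∈ Finset.range k, μ (Xi i) := Finset.sum_congr rfl fun j _ =>
            (hμ.iterate j).measure_preimage (hXimeas i).nullMeasurableSet
        _ = k * μ (Xi i) := by simp [Finset.sum_const, nsmul_eq_mul]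
    rw [ENNReal.div_le_iff hk0 hktop]
    rwa [mul_comm] at hone
  refine ⟨fun i _ => part1 i, ?_⟩
  by_contra hcon
  push_neg at hcon
  have hdisj : (↑(Finset.range h) : Set ℕ).PairwiseDisjoint Xi := by
    intro a ha b hb hab
    simp only [Finset.coe_range, Set.mem_Iio] at ha hb
    rcases lt_or_gt_of_ne hab with h' | h'
    · have hb1 : b ≤ h - 1 := by omega
      have := hcon a b h' hb1
      exact Set.disjoint_iff_inter_eq_empty.mpr this
    · have ha1 : a ≤ h - 1 := by omega
      have := hcon b a h' ha1
      exact (Set.disjoint_iff_inter_eq_empty.mpr this).symm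
  have hsumEq := measure_biUnion_finset hdisj (fun i _ => hXimeas i) (μ := μ)
  have hle1 : (h : ℝ≥0∞) * ((1 : ℝ≥0∞) / k) ≤ 1 := by
    calc (h : ℝ≥0∞) * ((1 : ℝ≥0∞) / k) = ∑ _i ∈ Finset.range h, (1 : ℝ≥0∞) / k := by
          simp [Finset.sum_const, nsmul_eq_mul]
      _ ≤ ∑ i ∈ Finset.range h, μ (Xi i) := Finset.sum_le_sum fun i _ => part1 i
      _ = μ (⋃ i ∈ Finset.range h, Xi i) := hsumEq.symm
      _ ≤ 1 := prob_le_one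
  have hhk : (h : ℝ≥0∞) ≤ k := by
    rw [mul_one_div, ENNReal.div_le_iff hk0 hktop, one_mul] at hle1
    exact hle1
  have : h ≤ k := by exact_mod_cast hhk
  omega
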